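/- Let L > 0, α > 0, R > 0 and ξ > 0 be real numbers. Then ∫_0^R (2r/R²) · ( ∫_0^{(r/R)^α ξ} h^{L−1} e^{−h} / Γ(L) dh ) dr = (γ(L, ξ) − ξ^{−2/α} γ(L + 2/α, ξ)) / Γ(L). -/

import Mathlib

open Real

open MeasureTheory Set

private lemma aux_II_congr_Ioc {g h : ℝ → ℝ} {b : ℝ} (hb : 0 ≤ b)
    (hg : IntervalIntegrable g volume 0 b)
    (heq : ∀ x ∈ Set.Ioc (0:ℝ) b, g x = h x) :
    IntervalIntegrable h volume 0 b := by
  rw [intervalIntegrable_iff, uIoc_of_le hb] at hg ⊢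
  exact hg.congr ((ae_restrict_iff' measurableSet_Ioc).mpr (Filter.Eventually.of_forall heq))

private lemma aux_gamma_II {s : ℝ} (hs : 0 < s) (a b : ℝ) :
    IntervalIntegrable (fun t => t ^ (s - 1) * Real.exp (-t)) volume a b :=
  (intervalIntegral.intervalIntegrable_rpow' (by linarith)).mul_continuousOn
    (Continuous.continuousOn (Real.continuous_exp.comp continuous_neg))

/-- The lower incomplete Gamma function `γ(s, x) = ∫_0^x t^{s−1} e^{−t} dt`. -/
noncomputable def lowerIncompleteGamma (s x : ℝ) : ℝ :=
  ∫ t in (0:ℝ)..x, t ^ (s - 1) * Real.exp (-t)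

/-- **Lemma 1** (computation-outage probability).  With channel-gain density
`h^{L−1}e^{−h}/Γ(L)` on `[0,∞)` and distance density `2r/R²` on `[0,R]`, the probability that
`R^α h ≤ r^α ξ` equals `(γ(L,ξ) − ξ^{−2/α} γ(L+2/α,ξ))/Γ(L)`. -/
theorem computation_outage_probability
    (L α R ξ : ℝ) (hL : 0 < L) (hα : 0 < α) (hR : 0 < R) (hξ : 0 < ξ) :
    (∫ r in (0:ℝ)..R, (2 * r / R ^ 2) *
        ∫ h in (0:ℝ)..((r / R) ^ α * ξ), h ^ (L - 1) * Real.exp (-h) / Real.Gamma L) =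
      (lowerIncompleteGamma L ξ - ξ ^ (-(2 / α)) * lowerIncompleteGamma (L + 2 / α) ξ) /
        Real.Gamma L := by
  set f : ℝ → ℝ := fun t => t ^ (L - 1) * Real.exp (-t) with hf
  set G : ℝ → ℝ := fun x => ∫ t in (0:ℝ)..x, f t with hG
  set φ : ℝ → ℝ := fun r => (r / R) ^ α * ξ with hφ
  set φ' : ℝ → ℝ := fun r => α * (r / R) ^ (α - 1) * (1 / R) * ξ with hφ'
  have hfint : ∀ a b : ℝ, IntervalIntegrable f volume a b := fun a b => aux_gamma_II hL a b
  have hφcont : ContinuousOn φ (uIcc (0:ℝ) R) := by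
    apply ContinuousOn.mul _ continuousOn_const
    exact (continuousOn_id.div_const R).rpow_const fun x _ => Or.inr hα.le
  have hmaps : MapsTo φ (uIcc (0:ℝ) R) (uIcc (0:ℝ) ξ) := by
    rw [uIcc_of_le hR.le, uIcc_of_le hξ.le]
    intro x hx
    simp only [hφ]
    constructor
    · exact mul_nonneg (Real.rpow_nonneg (div_nonneg hx.1 hR.le) _) hξ.le
    · calc (x / R) ^ α * ξ ≤ 1 * ξ := by
            gcongr
            exact Real.rpow_le_one (div_nonneg hx.1 hR.le) ((div_le_one hR).mpr hx.2) hα.le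
        _ = ξ := one_mul ξ
  have hGcont : ContinuousOn G (uIcc (0:ℝ) ξ) :=
    intervalIntegral.continuousOn_primitive_interval' (hfint 0 ξ) left_mem_uIcc
  have hφR : φ R = ξ := by simp [hφ, div_self hR.ne']
  have hφ0 : φ 0 = 0 := by simp [hφ, Real.zero_rpow hα.ne']
  have hG0 : G 0 = 0 := intervalIntegral.integral_same
  have hderφ : ∀ x ∈ Ioo (0:ℝ) R, HasDerivAt φ (φ' x) x := by
    intro x hx
    have h1 : HasDerivAt (fun r : ℝ => r / R) (1 / R) x := (hasDerivAt_id x).div_const R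
    have h2 : HasDerivAt (fun y : ℝ => y ^ α) (α * (x / R) ^ (α - 1)) (x / R) :=
      Real.hasDerivAt_rpow_const (Or.inl (div_pos hx.1 hR).ne')
    have h3 := (h2.comp x h1).mul_const ξ
    simpa [hφ, hφ', Function.comp] using h3
  have hmf : Measurable f := by
    apply Measurable.mul
    · measurability
    · exact (Real.continuous_exp.comp continuous_neg).measurable
  have hderG : ∀ y : ℝ, 0 < y → HasDerivAt G (f y) y := by
    intro y hy
    apply intervalIntegral.integral_hasDerivAt_right (hfint 0 y)
      (hmf.stronglyMeasurable.stronglyMeasurableAtFilter)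
    apply ContinuousAt.mul
    · exact Real.continuousAt_rpow_const _ _ (Or.inl hy.ne')
    · exact (Real.continuous_exp.comp continuous_neg).continuousAt
  -- pointwise identity for integrability of u'
  set ψ : ℝ → ℝ := fun x =>
    x ^ (α * L - 1) * (ξ ^ (L - 1) * α * (1 / R) * ξ / R ^ (α * L - 1) * Real.exp (-(φ x)))
    with hψ
  have hψint : IntervalIntegrable ψ volume 0 R := by
    apply (intervalIntegral.intervalIntegrable_rpow' (by nlinarith)).mul_continuousOn
    exact continuousOn_const.mul (Real.continuous_exp.comp_continuousOn hφcont.neg)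
  have heqψ : ∀ x ∈ Ioc (0:ℝ) R, ψ x = f (φ x) * φ' x := by
    intro x hx
    have hx0 : (0:ℝ) < x := hx.1
    have hxR : (0:ℝ) < x / R := div_pos hx0 hR
    have h1 : ((x / R) ^ α * ξ) ^ (L - 1) = (x / R) ^ (α * (L - 1)) * ξ ^ (L - 1) := by
      rw [Real.mul_rpow (Real.rpow_nonneg hxR.le _) hξ.le, ← Real.rpow_mul hxR.le]
    have h2 : (x / R) ^ (α * (L - 1)) * (x / R) ^ (α - 1) = x ^ (α * L - 1) / R ^ (α * L - 1) := by
      rw [← Real.rpow_add hxR, ← Real.div_rpow hx0.le hR.le]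
      ring_nf
    simp only [hψ, hf, hφ, hφ']
    rw [h1]
    linear_combination (-(ξ ^ (L - 1)) * Real.exp (-((x / R) ^ α * ξ)) * α * (1 / R) * ξ) * h2
  have hu' : IntervalIntegrable (fun x => f (φ x) * φ' x) volume 0 R :=
    aux_II_congr_Ioc hR.le hψint heqψ
  -- integration by parts
  have hvcont : ContinuousOn (fun r : ℝ => r ^ 2 / R ^ 2) (uIcc (0:ℝ) R) :=
    (continuous_pow 2).continuousOn.div_const _
  have parts := intervalIntegral.integral_mul_deriv_eq_deriv_mul_of_hasDeriv_right
    (u := fun r => G (φ r)) (v := fun r => r ^ 2 / R ^ 2)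
    (u' := fun r => f (φ r) * φ' r) (v' := fun r => 2 * r / R ^ 2)
    (hGcont.comp hφcont hmaps) hvcont
    (by
      rw [min_eq_left hR.le, max_eq_right hR.le]
      intro x hx
      have hφx : 0 < φ x := by
        simp only [hφ]
        exact mul_pos (Real.rpow_pos_of_pos (div_pos hx.1 hR) _) hξ
      exact ((hderG _ hφx).comp x (hderφ x hx)).hasDerivWithinAt)
    (by
      rw [min_eq_left hR.le, max_eq_right hR.le]
      intro x hx
      have : HasDerivAt (fun r : ℝ => r ^ 2 / R ^ 2) (2 * x / R ^ 2) x := by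
        simpa [pow_one] using (hasDerivAt_pow 2 x).div_const (R ^ 2)
      exact this.hasDerivWithinAt)
    hu' (((continuous_const.mul continuous_id').div_const _).intervalIntegrable 0 R)
  -- parts : ∫ x in 0..R, G (φ x) * (2 * x / R ^ 2)
  --   = G (φ R) * (R^2/R^2) - G (φ 0) * (0^2/R^2) - ∫ x in 0..R, (f (φ x) * φ' x) * (x^2/R^2)
  -- substitution
  set g₀ : ℝ → ℝ := fun u => ξ ^ (-(2 / α)) * (u ^ (L + 2 / α - 1) * Real.exp (-u)) with hg₀
  have hg₀int : IntervalIntegrable g₀ volume 0 ξ :=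
    IntervalIntegrable.const_mul (aux_gamma_II (by positivity) 0 ξ) _
  have hkey : ∀ x ∈ Ioc (0:ℝ) R,
      f (φ x) * φ' x * (x ^ 2 / R ^ 2) = φ' x • (g₀ ∘ φ) x := by
    intro x hx
    have hx0 : (0:ℝ) < x := hx.1
    have hxR : (0:ℝ) < x / R := div_pos hx0 hR
    have hφx : (0:ℝ) < φ x := by
      simp only [hφ]
      exact mul_pos (Real.rpow_pos_of_pos hxR _) hξ
    have e1 : (φ x) ^ (L + 2 / α - 1) = (φ x) ^ (L - 1) * (φ x) ^ (2 / α) := by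
      rw [← Real.rpow_add hφx]; ring_nf
    have e2 : (φ x) ^ (2 / α) = x ^ 2 / R ^ 2 * ξ ^ (2 / α) := by
      simp only [hφ]
      rw [Real.mul_rpow (Real.rpow_nonneg hxR.le _) hξ.le, ← Real.rpow_mul hxR.le,
        show α * (2 / α) = 2 by field_simp,
        show (2:ℝ) = ((2:ℕ):ℝ) by norm_num, Real.rpow_natCast, div_pow]
    have e3 : ξ ^ (-(2 / α)) * ξ ^ (2 / α) = 1 := by
      rw [← Real.rpow_add hξ]; simp
    simp only [hg₀, Function.comp_apply, smul_eq_mul, hf]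
    rw [e1, e2]
    linear_combination (-(φ' x * (φ x) ^ (L - 1) * (x ^ 2 / R ^ 2) * Real.exp (-(φ x)))) * e3
  have hff : ∀ x ∈ Ioo (min (0:ℝ) R) (max (0:ℝ) R), HasDerivWithinAt φ (φ' x) (Ioi x) x := by
    rw [min_eq_left hR.le, max_eq_right hR.le]
    exact fun x hx => (hderφ x hx).hasDerivWithinAt
  have hgc : ContinuousOn g₀ (φ '' Ioo (min (0:ℝ) R) (max (0:ℝ) R)) := by
    refine ContinuousOn.mono (s := Ioi (0:ℝ)) ?_ ?_
    · exact continuousOn_const.mul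
        ((continuousOn_id.rpow_const fun x hx => Or.inl (ne_of_gt hx)).mul
          (Real.continuous_exp.comp continuous_neg).continuousOn)
    · rintro _ ⟨x, hx, rfl⟩
      rw [min_eq_left hR.le, max_eq_right hR.le] at hx
      simp only [hφ]
      exact mul_pos (Real.rpow_pos_of_pos (div_pos hx.1 hR) _) hξ
  have hg1 : IntegrableOn g₀ (φ '' uIcc (0:ℝ) R) volume :=
    ((intervalIntegrable_iff' (f := g₀)).mp hg₀int).mono_set hmaps.image_subset
  have hg2 : IntegrableOn (fun x => φ' x • (g₀ ∘ φ) x) (uIcc (0:ℝ) R) volume := by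
    have hKint : IntegrableOn (fun x => f (φ x) * φ' x * (x ^ 2 / R ^ 2)) (uIcc (0:ℝ) R) volume :=
      (intervalIntegrable_iff' (f := fun x => f (φ x) * φ' x * (x ^ 2 / R ^ 2))).mp (hu'.mul_continuousOn hvcont)
    apply hKint.congr
    have h0 : ∀ᵐ x : ℝ, x ≠ 0 := by
      rw [ae_iff]; simp only [ne_eq, not_not, Set.setOf_eq_eq_singleton]; exact measure_singleton (0:ℝ)
    filter_upwards [ae_restrict_mem measurableSet_uIcc, ae_restrict_of_ae h0] with x hx hx0
    rw [uIcc_of_le hR.le] at hx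
    exact hkey x ⟨lt_of_le_of_ne hx.1 (Ne.symm hx0), hx.2⟩
  have hae : ∀ᵐ x ∂(volume : Measure ℝ), x ∈ Set.uIoc (0:ℝ) R →
      f (φ x) * φ' x * (x ^ 2 / R ^ 2) = φ' x • (g₀ ∘ φ) x :=
    Filter.Eventually.of_forall fun x hx => hkey x (by rwa [uIoc_of_le hR.le] at hx)
  have hsub : (∫ x in (0:ℝ)..R, f (φ x) * φ' x * (x ^ 2 / R ^ 2)) = ∫ u in (0:ℝ)..ξ, g₀ u := by
    rw [intervalIntegral.integral_congr_ae hae,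
      intervalIntegral.integral_comp_smul_deriv''' hφcont hff hgc hg1 hg2, hφ0, hφR]
  beta_reduce at parts
  have hint' : (∫ u in (0:ℝ)..ξ, g₀ u) = ξ ^ (-(2 / α)) * lowerIncompleteGamma (L + 2 / α) ξ := by
    simp only [hg₀]
    rw [intervalIntegral.integral_const_mul]
    rfl
  have step1 : (∫ r in (0:ℝ)..R, (2 * r / R ^ 2) *
        ∫ h in (0:ℝ)..(φ r), f h / Real.Gamma L) =
      (∫ r in (0:ℝ)..R, (2 * r / R ^ 2) * G (φ r)) / Real.Gamma L := by
    rw [← intervalIntegral.integral_div]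
    refine intervalIntegral.integral_congr fun r _ => ?_
    rw [intervalIntegral.integral_div]
    ring
  have comm : (∫ r in (0:ℝ)..R, (2 * r / R ^ 2) * G (φ r))
      = ∫ x in (0:ℝ)..R, G (φ x) * (2 * x / R ^ 2) :=
    intervalIntegral.integral_congr fun r _ => mul_comm _ _
  have hGξ : G ξ = lowerIncompleteGamma L ξ := rfl
  rw [step1, comm, parts, hsub, hφR, hφ0, hG0, hint', hGξ,
    div_self (pow_ne_zero 2 hR.ne')]
  ring
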